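/- For all real u, the function d_h(u) = (5/6)·1[u>1] + (u - u³/6)·1[-1≤u≤1] - (5/6)·1[u<-1] satisfies d_h(u) ≤ ln(1 + u + u²/2). -/
import Mathlib

noncomputable def dh (u : ℝ) : ℝ :=
  if u > 1 then 5/6 else if u < -1 then -5/6 else u - u^3/6

open Real

lemma exp_upper {t : ℝ} (ht : |t| ≤ 1) :
    Real.exp t ≤ 1 + t + t^2/2 + t^3/6 + 5/96 * t^4 := by
  have h := Real.exp_bound ht (n := 4) (by norm_num)
  have hsum : ∑ m ∈ Finset.range 4, t ^ m / m.factorial = 1 + t + t^2/2 + t^3/6 := by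
    norm_num [Finset.sum_range_succ, Nat.factorial]
  rw [hsum] at h
  norm_num [Nat.factorial] at h
  have h4 : |t| ^ 4 = t ^ 4 := by
    rw [← abs_pow, abs_of_nonneg (by positivity)]
  rw [h4] at h
  have := (abs_le.mp h).2
  linarith

lemma key {u : ℝ} (h1 : -1 ≤ u) (h2 : u ≤ 1) :
    Real.exp (u - u^3/6) ≤ 1 + u + u^2/2 := by
  have habs : |u - u^3/6| ≤ 1 := by
    rw [abs_le]
    constructor <;> nlinarith [sq_nonneg (1+u), sq_nonneg (1-u), sq_nonneg u]
  have hb := exp_upper habs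
  nlinarith [sq_nonneg u, sq_nonneg (u^2), sq_nonneg (u^3), sq_nonneg (u^2*(1+u)), sq_nonneg (u^3*(1+u)), sq_nonneg (u^2*(1-u)), sq_nonneg (u^3*(1-u)), mul_nonneg (mul_nonneg (sub_nonneg.mpr h2) (by linarith : (0:ℝ) ≤ 1+u)) (sq_nonneg (u^2)), mul_nonneg (mul_nonneg (sub_nonneg.mpr h2) (by linarith : (0:ℝ) ≤ 1+u)) (sq_nonneg (u^3))]

theorem stmt_0 : ∀ u : ℝ, dh u ≤ Real.log (1 + u + u^2/2) := by
  intro u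
  have hy : (0:ℝ) < 1 + u + u^2/2 := by nlinarith [sq_nonneg (1+u)]
  rw [Real.le_log_iff_exp_le hy]
  unfold dh
  split_ifs with hgt hlt
  · -- u > 1
    have h1 : Real.exp (5/6) ≤ 5/2 := by
      have := exp_upper (t := 5/6) (by norm_num [abs_of_nonneg])
      nlinarith
    nlinarith
  · -- u < -1
    have h1 : (2:ℝ) ≤ Real.exp (5/6) := by
      have := Real.quadratic_le_exp_of_nonneg (x := 5/6) (by norm_num)
      nlinarith
    have h2 : Real.exp (-(5/6)) ≤ 1/2 := by
      rw [Real.exp_neg]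
      rw [inv_le_comm₀ (Real.exp_pos _) (by norm_num)]
      linarith
    have : Real.exp (-5/6 : ℝ) ≤ 1/2 := by rw [show (-5/6 : ℝ) = -(5/6) by ring]; exact h2
    nlinarith [sq_nonneg (1+u)]
  · exact key (by linarith) (by linarith)
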